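/- Let E ⊆ Ω be a field extension and let K, K' be intermediate fields of Ω/E, each of which is a finite Galois extension of E whose Galois group over E is isomorphic, as an abstract group, to the symmetric group S₄ on four letters. If K ∩ K' ≠ E, then there is an intermediate field F with E ⊊ F ⊆ K ∩ K' and [F : E] = 2. (This is the core of Lemma 8.2: since the quadratic subextension of such an S₄-extension is unique, two S₄-splitting fields over E whose quadratic subextensions differ must be linearly disjoint over E.) -/

import Mathlib

open IntermediateField

set_option maxHeartbeats 4000000 in
set_option maxRecDepth 10000 in
private lemma sign_swap_aux : ∀ x : Equiv.Perm (Fin 4), Equiv.Perm.sign x = -1 →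
    ∃ g : Equiv.Perm (Fin 4), ∃ a b : Fin 4, a ≠ b ∧ x * (g * x * g⁻¹) * x = Equiv.swap a b := by
  decide

/-- A proper normal subgroup of `S₄` consists of even permutations. -/
private lemma normal_le_ker_sign (H : Subgroup (Equiv.Perm (Fin 4))) (hn : H.Normal)
    (hH : H ≠ ⊤) : ∀ x ∈ H, Equiv.Perm.sign x = 1 := by
  intro x hx
  by_contra hs
  have hs' : Equiv.Perm.sign x = -1 := by
    rcases Int.units_eq_one_or (Equiv.Perm.sign x) with h | h
    · exact absurd h hs
    · exact h
  obtain ⟨g, a, b, hab, hswap⟩ := sign_swap_aux x hs'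
  have hsw : Equiv.swap a b ∈ H := by
    rw [← hswap]
    exact H.mul_mem (H.mul_mem hx (hn.conj_mem x hx g)) hx
  apply hH
  rw [eq_top_iff, ← Equiv.Perm.closure_isSwap, Subgroup.closure_le]
  rintro σ ⟨c, d, hcd, rfl⟩
  obtain ⟨u, hu⟩ := isConj_iff.mp (Equiv.Perm.isConj_swap hab hcd)
  rw [← hu]
  exact hn.conj_mem _ hsw u

set_option synthInstance.maxHeartbeats 1000000 in
set_option maxHeartbeats 4000000 in
/-- Core of **Lemma 8.2**: if `K` and `K'` are intermediate fields of `Ω/E`, each finite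
Galois over `E` with Galois group isomorphic to `S₄`, and `K ∩ K' ≠ E`, then `K ∩ K'`
contains a quadratic extension of `E`. -/
theorem stmt12 {E Ω : Type*} [Field E] [Field Ω] [Algebra E Ω]
    (K K' : IntermediateField E Ω)
    [FiniteDimensional E K] [IsGalois E K]
    [FiniteDimensional E K'] [IsGalois E K']
    (hK : Nonempty ((K ≃ₐ[E] K) ≃* Equiv.Perm (Fin 4)))
    (hK' : Nonempty ((K' ≃ₐ[E] K') ≃* Equiv.Perm (Fin 4)))
    (hne : K ⊓ K' ≠ ⊥) :
    ∃ F : IntermediateField E Ω, ⊥ < F ∧ F ≤ K ⊓ K' ∧ Module.finrank E F = 2 := by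
  classical
  obtain ⟨e⟩ := hK
  -- the subgroup of "even" automorphisms
  set N : Subgroup (K ≃ₐ[E] K) := (Equiv.Perm.sign.comp e.toMonoidHom).ker with hN
  -- the intermediate field of `K` corresponding to `K ⊓ K'`
  set L₀ : IntermediateField E K := K'.comap K.val with hL₀
  -- `L₀` is stable under every automorphism of `K`
  have stable : ∀ (g : K ≃ₐ[E] K) (x : K), (x : Ω) ∈ K' → ((g x : K) : Ω) ∈ K' := by
    intro g x hx
    have hint : IsIntegral E (g x) := IsIntegral.of_finite E _
    have hint' : IsIntegral E ((g x : K) : Ω) := IsIntegral.map (IsScalarTower.toAlgHom E K Ω) hint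
    apply hint'.mem_intermediateField_of_minpoly_splits
    have h5 : minpoly E ((g x : K) : Ω) = minpoly E (⟨(x : Ω), hx⟩ : K') := by
      rw [show ((g x : K) : Ω) = algebraMap K Ω (g x) from rfl,
        minpoly.algebraMap_eq (algebraMap K Ω).injective,
        minpoly.algEquiv_eq g x,
        ← minpoly.algebraMap_eq (algebraMap K Ω).injective x,
        show algebraMap K Ω x = algebraMap K' Ω ⟨(x : Ω), hx⟩ from rfl,
        minpoly.algebraMap_eq (algebraMap K' Ω).injective]
    rw [h5]
    exact (IsGalois.to_normal (F := E) (E := K')).splits _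
  -- its fixing subgroup is normal and proper
  set H : Subgroup (K ≃ₐ[E] K) := L₀.fixingSubgroup with hH
  have hHnormal : H.Normal := by
    constructor
    intro n hn g
    rw [IntermediateField.mem_fixingSubgroup_iff]
    intro x hx
    have hx' : (g⁻¹ : K ≃ₐ[E] K) x ∈ L₀ := stable g⁻¹ x hx
    have hfix : n ((g⁻¹ : K ≃ₐ[E] K) x) = (g⁻¹ : K ≃ₐ[E] K) x :=
      (IntermediateField.mem_fixingSubgroup_iff _ _).mp hn _ hx'
    show g (n ((g⁻¹ : K ≃ₐ[E] K) x)) = x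
    rw [hfix]
    exact g.apply_symm_apply x
  have hL0ne : L₀ ≠ ⊥ := by
    intro h
    apply hne
    rw [eq_bot_iff]
    intro x hx
    rw [IntermediateField.mem_inf] at hx
    have hx0 : (⟨x, hx.1⟩ : K) ∈ L₀ := hx.2
    rw [h, IntermediateField.mem_bot] at hx0
    obtain ⟨y, hy⟩ := hx0
    rw [IntermediateField.mem_bot]
    exact ⟨y, by rw [IsScalarTower.algebraMap_apply E K Ω, hy]; rfl⟩
  have hHne : H ≠ ⊤ := by
    intro h
    apply hL0ne
    have h1 := IsGalois.fixedField_fixingSubgroup L₀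
    rw [← hH, h, ← (IntermediateField.fixingSubgroup_bot : (⊥ : IntermediateField E K).fixingSubgroup = ⊤),
      IsGalois.fixedField_fixingSubgroup (⊥ : IntermediateField E K)] at h1
    exact h1.symm
  -- `H ≤ N` by the group theory of `S₄`
  have hHN : H ≤ N := by
    have hmapn : (H.map e.toMonoidHom).Normal := hHnormal.map e.toMonoidHom e.surjective
    have hmapne : H.map e.toMonoidHom ≠ ⊤ := by
      intro h
      apply hHne
      rw [eq_top_iff]
      intro x _
      have : e x ∈ H.map e.toMonoidHom := by rw [h]; trivial
      obtain ⟨y, hy, hyx⟩ := this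
      rwa [← e.injective hyx]
    intro x hx
    have := normal_le_ker_sign _ hmapn hmapne (e x) ⟨x, hx, rfl⟩
    exact this
  -- the fixed field of `N` is the desired quadratic subfield
  set F₀ : IntermediateField E K := IntermediateField.fixedField N with hF₀
  have hF₀L₀ : F₀ ≤ L₀ := by
    rw [← IsGalois.fixedField_fixingSubgroup L₀]
    rw [IntermediateField.le_iff_le, IntermediateField.fixingSubgroup_fixedField]
    exact hHN
  -- compute the degree
  have hcard : Nat.card (K ≃ₐ[E] K) = 24 := by
    rw [Nat.card_congr e.toEquiv, Nat.card_eq_fintype_card, Fintype.card_perm, Fintype.card_fin]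
    rfl
  have hsurj : Function.Surjective (Equiv.Perm.sign.comp e.toMonoidHom) := fun z => by
    obtain ⟨p, hp⟩ := Equiv.Perm.sign_surjective (Fin 4) z
    exact ⟨e.symm p, by simp [hp]⟩
  have hidx : N.index = 2 := by
    rw [hN, Subgroup.index_ker, MonoidHom.range_eq_top.mpr hsurj, Subgroup.card_top,
      Nat.card_eq_fintype_card, Fintype.card_units_int]
  have hcardN : Nat.card N = 12 := by
    have := Subgroup.card_mul_index N
    rw [hidx, hcard] at this
    omega
  have hrankF : Module.finrank E (↥F₀) = 2 := by
    have h1 := IntermediateField.finrank_fixedField_eq_card N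
    have h2 := Module.finrank_mul_finrank E (↥F₀) (↥K)
    have h3 : Module.finrank E K = 24 := by
      rw [← IsGalois.card_aut_eq_finrank, hcard]
    rw [h1, hcardN, h3] at h2
    omega
  have hrank : Module.finrank E (IntermediateField.lift F₀) = 2 := by
    rw [← (IntermediateField.liftAlgEquiv F₀).toLinearEquiv.finrank_eq]
    exact hrankF
  refine ⟨IntermediateField.lift F₀, ?_, ?_, hrank⟩
  · rw [bot_lt_iff_ne_bot]
    intro h
    rw [h, IntermediateField.finrank_bot] at hrank
    omega
  · rw [le_inf_iff]
    refine ⟨IntermediateField.lift_le F₀, ?_⟩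
    intro x hx
    have hxK : x ∈ K := IntermediateField.lift_le F₀ hx
    have hy : (⟨x, hxK⟩ : K) ∈ F₀ := (IntermediateField.mem_lift (⟨x, hxK⟩ : K)).mp hx
    have := hF₀L₀ hy
    exact this
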